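/- Combining executions with equal windowed first-write projections: Let ρ1 : σ_init →* σ1 and ρ2 : σ_init →* σ2 be abstract executions of a round-based register protocol with visibility range v, such that for every k ∈ ℕ the restrictions of fwo(ρ1) and fwo(ρ2) to registers of rounds in the window [k−v, k] are equal. Then there exists an abstract execution ρ : σ_init →* σ with S(σ) = S(σ1) ∪ S(σ2), W(σ) = W(σ1) = W(σ2), and for all k ∈ ℕ, the restriction of fwo(ρ) to rounds [k−v, k] equals the corresponding restriction of fwo(ρ1). -/

import Mathlib

open scoped Classical

/-- Actions of a round-based register protocol: round increment, read of value `x`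
from register `α` of round `k - i`, and write of value `x` to register `α` of the
current round. -/
inductive Act (dim : ℕ) (D : Type) where
  | incr : Act dim D
  | read (i : ℕ) (α : Fin dim) (x : D) : Act dim D
  | write (α : Fin dim) (x : D) : Act dim D

/-- A round-based register protocol. -/
structure Protocol (Q D : Type) (dim : ℕ) where
  q0 : Q
  d0 : D
  v : ℕ
  T : Set (Q × Act dim D × Q)
  read_le : ∀ q i α x q', (q, Act.read i α x, q') ∈ T → i ≤ v
  write_ne : ∀ q α x q', (q, Act.write α x, q') ∈ T → x ≠ d0

/-- A move: a transition together with the round on which it is performed. -/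
abbrev Move (Q D : Type) (dim : ℕ) := (Q × Act dim D × Q) × ℕ

/-- A concrete configuration: a finitely supported multiset of locations and a
valuation of all registers. -/
structure Conc (Q D : Type) (dim : ℕ) where
  loc : (Q × ℕ) →₀ ℕ
  reg : ℕ → Fin dim → D

variable {Q D : Type} {dim : ℕ}

/-- Value read from register `α` of round `k - i` (registers of negative rounds
hold the initial value). -/
def regVal (P : Protocol Q D dim) (γ : Conc Q D dim) (k i : ℕ) (α : Fin dim) : D :=
  if i ≤ k then γ.reg (k - i) α else P.d0

/-- Updating register `α` of round `k` to value `x`. -/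
def updReg (r : ℕ → Fin dim → D) (k : ℕ) (α : Fin dim) (x : D) : ℕ → Fin dim → D :=
  fun k' α' => if k' = k ∧ α' = α then x else r k' α'

/-- Concrete step relation of a round-based register protocol. -/
inductive ConcStep [DecidableEq Q] (P : Protocol Q D dim) :
    Conc Q D dim → Move Q D dim → Conc Q D dim → Prop where
  | incr {q q' : Q} {k : ℕ} {γ γ' : Conc Q D dim} :
      (q, Act.incr, q') ∈ P.T → 0 < γ.loc (q, k) →
      γ'.loc = γ.loc - Finsupp.single (q, k) 1 + Finsupp.single (q', k + 1) 1 →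
      γ'.reg = γ.reg →
      ConcStep P γ ((q, Act.incr, q'), k) γ'
  | read {q q' : Q} {k i : ℕ} {α : Fin dim} {x : D} {γ γ' : Conc Q D dim} :
      (q, Act.read i α x, q') ∈ P.T → 0 < γ.loc (q, k) →
      regVal P γ k i α = x →
      γ'.loc = γ.loc - Finsupp.single (q, k) 1 + Finsupp.single (q', k) 1 →
      γ'.reg = γ.reg →
      ConcStep P γ ((q, Act.read i α x, q'), k) γ'
  | write {q q' : Q} {k : ℕ} {α : Fin dim} {x : D} {γ γ' : Conc Q D dim} :
      (q, Act.write α x, q') ∈ P.T → 0 < γ.loc (q, k) →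
      γ'.loc = γ.loc - Finsupp.single (q, k) 1 + Finsupp.single (q', k) 1 →
      γ'.reg = updReg γ.reg k α x →
      ConcStep P γ ((q, Act.write α x, q'), k) γ'

/-- Concrete reachability. -/
def ConcReach [DecidableEq Q] (P : Protocol Q D dim) : Conc Q D dim → Conc Q D dim → Prop :=
  Relation.ReflTransGen (fun γ γ' => ∃ m, ConcStep P γ m γ')

/-- Initial concrete configuration with `n` processes. -/
noncomputable def Conc.init [DecidableEq Q] (P : Protocol Q D dim) (n : ℕ) : Conc Q D dim :=
  ⟨Finsupp.single (P.q0, 0) n, fun _ _ => P.d0⟩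

/-- Number of processes of a concrete configuration. -/
def Conc.size (γ : Conc Q D dim) : ℕ := γ.loc.sum fun _ n => n

/-- Support of the location multiset of a concrete configuration. -/
def Conc.supp (γ : Conc Q D dim) : Set (Q × ℕ) := {l | 0 < γ.loc l}

/-- The set of non-blank registers of a concrete configuration. -/
def Conc.nonBlank (P : Protocol Q D dim) (γ : Conc Q D dim) : Set (ℕ × Fin dim) :=
  {r | γ.reg r.1 r.2 ≠ P.d0}

/-- An abstract configuration: a set of locations and a set of written registers. -/
structure Abs (Q : Type) (dim : ℕ) where
  S : Set (Q × ℕ)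
  W : Set (ℕ × Fin dim)

/-- Abstract step relation. -/
inductive AbsStep (P : Protocol Q D dim) :
    Abs Q dim → Move Q D dim → Abs Q dim → Prop where
  | incr {σ : Abs Q dim} {q q' : Q} {k : ℕ} :
      (q, Act.incr, q') ∈ P.T → (q, k) ∈ σ.S →
      AbsStep P σ ((q, Act.incr, q'), k) ⟨σ.S ∪ {(q', k + 1)}, σ.W⟩
  | readBlank {σ : Abs Q dim} {q q' : Q} {k i : ℕ} {α : Fin dim} :
      (q, Act.read i α P.d0, q') ∈ P.T → (q, k) ∈ σ.S →
      (i ≤ k → (k - i, α) ∉ σ.W) →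
      AbsStep P σ ((q, Act.read i α P.d0, q'), k) ⟨σ.S ∪ {(q', k)}, σ.W⟩
  | readVal {σ : Abs Q dim} {q q' q1 q2 : Q} {k i : ℕ} {α : Fin dim} {x : D} :
      x ≠ P.d0 → (q, Act.read i α x, q') ∈ P.T → (q, k) ∈ σ.S →
      i ≤ k → (k - i, α) ∈ σ.W →
      (q1, Act.write α x, q2) ∈ P.T → (q1, k - i) ∈ σ.S → (q2, k - i) ∈ σ.S →
      AbsStep P σ ((q, Act.read i α x, q'), k) ⟨σ.S ∪ {(q', k)}, σ.W⟩
  | write {σ : Abs Q dim} {q q' : Q} {k : ℕ} {α : Fin dim} {x : D} :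
      (q, Act.write α x, q') ∈ P.T → (q, k) ∈ σ.S →
      AbsStep P σ ((q, Act.write α x, q'), k) ⟨σ.S ∪ {(q', k)}, σ.W ∪ {(k, α)}⟩

/-- Abstract reachability. -/
def AbsReach (P : Protocol Q D dim) : Abs Q dim → Abs Q dim → Prop :=
  Relation.ReflTransGen (fun σ σ' => ∃ m, AbsStep P σ m σ')

/-- The initial abstract configuration. -/
def Abs.init (P : Protocol Q D dim) : Abs Q dim := ⟨{(P.q0, 0)}, ∅⟩

/-- Abstract execution along a list of moves. -/
inductive AbsRun (P : Protocol Q D dim) : Abs Q dim → List (Move Q D dim) → Abs Q dim → Prop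
  | nil (σ : Abs Q dim) : AbsRun P σ [] σ
  | cons {σ σ' σ'' : Abs Q dim} {m : Move Q D dim} {ms : List (Move Q D dim)} :
      AbsStep P σ m σ' → AbsRun P σ' ms σ'' → AbsRun P σ (m :: ms) σ''

/-- First-write order of a schedule, given a set of already written registers. -/
noncomputable def fwo (W : Set (ℕ × Fin dim)) : List (Move Q D dim) → List (ℕ × Fin dim)
  | [] => []
  | ((_, Act.write α _, _), k) :: ms =>
      if (k, α) ∈ W then fwo W ms else (k, α) :: fwo (W ∪ {(k, α)}) ms
  | _ :: ms => fwo W ms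

/-- Projection of a sequence of registers onto those whose round lies in `[k - v, k]`. -/
def winproj (v k : ℕ) (F : List (ℕ × Fin dim)) : List (ℕ × Fin dim) :=
  F.filter (fun r => decide (k - v ≤ r.1 ∧ r.1 ≤ k))

namespace Combine

/-- register written by a move, if any -/
def wreg : Move Q D dim → Option (ℕ × Fin dim)
  | ((_, Act.write α _, _), k) => some (k, α)
  | _ => none

/-- location produced by a move -/
def prodLoc : Move Q D dim → Q × ℕ
  | ((_, Act.incr, q'), k) => (q', k + 1)
  | ((_, Act.read _ _ _, q'), k) => (q', k)
  | ((_, Act.write _ _, q'), k) => (q', k)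

lemma prodLoc_round (m : Move Q D dim) : m.2 ≤ (prodLoc m).2 := by
  rcases m with ⟨⟨q, a, q'⟩, k⟩
  cases a <;> simp [prodLoc]

/-- abstract successor configuration -/
def absNext (σ : Abs Q dim) (m : Move Q D dim) : Abs Q dim :=
  ⟨σ.S ∪ {prodLoc m}, σ.W ∪ {u | wreg m = some u}⟩

lemma step_absNext {P : Protocol Q D dim} {σ σ' : Abs Q dim} {m : Move Q D dim}
    (h : AbsStep P σ m σ') : σ' = absNext σ m := by
  cases h <;> simp [absNext, prodLoc, wreg, Set.setOf_eq_eq_singleton']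

lemma run_foldl {P : Protocol Q D dim} {σ0 σ : Abs Q dim} {ms : List (Move Q D dim)}
    (h : AbsRun P σ0 ms σ) : σ = ms.foldl absNext σ0 := by
  induction h with
  | nil => simp
  | cons hstep _ ih => rw [List.foldl_cons, ← step_absNext hstep]; exact ih

lemma run_steps {P : Protocol Q D dim} {σ0 σ : Abs Q dim} {ms : List (Move Q D dim)}
    (h : AbsRun P σ0 ms σ) (d : Move Q D dim) :
    ∀ i, i < ms.length →
      AbsStep P ((ms.take i).foldl absNext σ0) (ms.getD i d)
        ((ms.take (i + 1)).foldl absNext σ0) := by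
  induction h with
  | nil => intro i hi; simp at hi
  | @cons σ σ' σ'' m tl hstep htl ih =>
    intro i hi
    cases i with
    | zero =>
      simpa using (step_absNext hstep ▸ hstep)
    | succ i =>
      have := ih i (by simpa using hi)
      rw [step_absNext hstep] at this
      simpa [List.take_succ_cons] using this

lemma run_of_steps (P : Protocol Q D dim) (d : Move Q D dim) :
    ∀ (L : List (Move Q D dim)) (σ0 : Abs Q dim),
      (∀ i, i < L.length →
        AbsStep P ((L.take i).foldl absNext σ0) (L.getD i d)
          ((L.take (i + 1)).foldl absNext σ0)) →
      AbsRun P σ0 L (L.foldl absNext σ0)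
  | [], σ0, _ => AbsRun.nil σ0
  | m :: tl, σ0, h => by
    have h0 := h 0 (by simp)
    simp only [List.take_zero, List.foldl_nil, List.getD_cons_zero] at h0
    refine AbsRun.cons h0 ?_
    have : (List.take 1 (m :: tl)).foldl absNext σ0 = absNext σ0 m := by simp
    rw [this] at h0
    have := run_of_steps P d tl (absNext σ0 m) (fun i hi => by
      have := h (i + 1) (by simpa using hi)
      simpa [List.take_succ_cons] using this)
    simpa using this

lemma foldl_S (σ0 : Abs Q dim) :
    ∀ ms : List (Move Q D dim),
      (ms.foldl absNext σ0).S = σ0.S ∪ {ℓ | ∃ m ∈ ms, prodLoc m = ℓ}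
  | [] => by simp
  | m :: tl => by
    rw [List.foldl_cons, foldl_S (absNext σ0 m) tl]
    ext x
    simp [absNext]
    tauto

lemma foldl_W (σ0 : Abs Q dim) :
    ∀ ms : List (Move Q D dim),
      (ms.foldl absNext σ0).W = σ0.W ∪ {u | ∃ m ∈ ms, wreg m = some u}
  | [] => by simp
  | m :: tl => by
    rw [List.foldl_cons, foldl_W (absNext σ0 m) tl]
    ext x
    simp [absNext]
    tauto


lemma wreg_round {m : Move Q D dim} {u : ℕ × Fin dim} (h : wreg m = some u) : m.2 = u.1 := by
  rcases m with ⟨⟨q, a, q'⟩, k⟩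
  cases a <;> simp [wreg] at h <;> simp [← h]


def wr (ms : List (Move Q D dim)) : List (ℕ × Fin dim) := ms.filterMap wreg

lemma mem_wr {ms : List (Move Q D dim)} {u : ℕ × Fin dim} :
    u ∈ wr ms ↔ ∃ m ∈ ms, wreg m = some u := by
  simp [wr, List.mem_filterMap]

lemma mem_wr_cons {m : Move Q D dim} {l : List (Move Q D dim)} {u : ℕ × Fin dim} :
    u ∈ wr (m :: l) ↔ wreg m = some u ∨ u ∈ wr l := by
  rw [mem_wr]
  constructor
  · rintro ⟨m', hm', hw⟩
    rcases List.mem_cons.1 hm' with rfl | h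
    · exact Or.inl hw
    · exact Or.inr (mem_wr.2 ⟨m', h, hw⟩)
  · rintro (h | h)
    · exact ⟨m, List.mem_cons_self, h⟩
    · rcases mem_wr.1 h with ⟨m', hm', hw⟩
      exact ⟨m', List.mem_cons_of_mem _ hm', hw⟩

def fwIdx : List (Move Q D dim) → (ℕ × Fin dim) → ℕ
  | [], _ => 0
  | m :: l, u => if wreg m = some u then 0 else fwIdx l u + 1

lemma fwIdx_le (d : Move Q D dim) {u : ℕ × Fin dim} :
    ∀ {ms : List (Move Q D dim)} {s : ℕ}, s < ms.length →
      wreg (ms.getD s d) = some u → fwIdx ms u ≤ s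
  | [], s, hs, _ => by simp at hs
  | m :: l, 0, _, hw => by
    simp only [List.getD_cons_zero] at hw
    simp [fwIdx, hw]
  | m :: l, s + 1, hs, hw => by
    simp only [List.getD_cons_succ] at hw
    by_cases h : wreg m = some u
    · simp [fwIdx, h]
    · simp only [fwIdx, if_neg h]
      have := fwIdx_le d (ms := l) (s := s) (by simpa using hs) hw
      omega

lemma fwIdx_lt_length {ms : List (Move Q D dim)} {u : ℕ × Fin dim} (h : u ∈ wr ms) :
    fwIdx ms u < ms.length := by
  induction ms with
  | nil => simp [wr] at h
  | cons m l ih =>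
    by_cases hm : wreg m = some u
    · simp [fwIdx, hm]
    · have : u ∈ wr l := by
        rcases mem_wr.1 h with ⟨m', hm', hw⟩
        rcases List.mem_cons.1 hm' with rfl | h'
        · exact absurd hw hm
        · exact mem_wr.2 ⟨m', h', hw⟩
      have := ih this
      simp only [fwIdx, if_neg hm, List.length_cons]
      omega

lemma fwIdx_writes (d : Move Q D dim) {ms : List (Move Q D dim)} {u : ℕ × Fin dim}
    (h : u ∈ wr ms) : wreg (ms.getD (fwIdx ms u) d) = some u := by
  induction ms with
  | nil => simp [wr] at h
  | cons m l ih =>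
    by_cases hm : wreg m = some u
    · simp [fwIdx, hm]
    · have : u ∈ wr l := by
        rcases mem_wr.1 h with ⟨m', hm', hw⟩
        rcases List.mem_cons.1 hm' with rfl | h'
        · exact absurd hw hm
        · exact mem_wr.2 ⟨m', h', hw⟩
      simpa [fwIdx, if_neg hm] using ih this

lemma fwIdx_ge (d : Move Q D dim) :
    ∀ {ms : List (Move Q D dim)} {u : ℕ × Fin dim} {t : ℕ},
      (∀ s, s < t → wreg (ms.getD s d) ≠ some u) → t ≤ ms.length → t ≤ fwIdx ms u
  | ms, u, 0, _, _ => Nat.zero_le _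
  | [], u, t + 1, _, ht => by simp at ht
  | m :: l, u, t + 1, h, ht => by
    have hm : wreg m ≠ some u := by simpa using h 0 (Nat.succ_pos t)
    simp only [fwIdx, if_neg hm]
    have : t ≤ fwIdx l u := by
      refine fwIdx_ge d (fun s hs => ?_) (by simpa using ht)
      simpa using h (s + 1) (by omega)
    omega

lemma fwIdx_inj (d : Move Q D dim) {ms : List (Move Q D dim)} {u u' : ℕ × Fin dim}
    (hu : u ∈ wr ms) (hu' : u' ∈ wr ms) (h : fwIdx ms u = fwIdx ms u') : u = u' := by
  have h1 := fwIdx_writes d hu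
  have h2 := fwIdx_writes d hu'
  rw [h] at h1
  rw [h1] at h2
  exact Option.some_injective _ h2

lemma fwIdx_round (d : Move Q D dim) {ms : List (Move Q D dim)} {u : ℕ × Fin dim}
    (h : u ∈ wr ms) : (ms.getD (fwIdx ms u) d).2 = u.1 :=
  wreg_round (fwIdx_writes d h)

lemma mem_fwo {u : ℕ × Fin dim} :
    ∀ (ms : List (Move Q D dim)) (W : Set (ℕ × Fin dim)),
      (u ∈ fwo W ms ↔ u ∈ wr ms ∧ u ∉ W)
  | [], W => by simp [fwo, wr]
  | m :: l, W => by
    rcases m with ⟨⟨q, a, q'⟩, k⟩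
    cases a with
    | incr => simp [fwo, mem_fwo l W, mem_wr_cons, wreg]
    | read i α x => simp [fwo, mem_fwo l W, mem_wr_cons, wreg]
    | write α x =>
      have hwr : wreg (((q, Act.write α x, q'), k) : Move Q D dim) = some (k, α) := rfl
      simp only [fwo]
      by_cases hW : (k, α) ∈ W
      · rw [if_pos hW, mem_fwo l W, mem_wr_cons]
        constructor
        · rintro ⟨h1, h2⟩; exact ⟨Or.inr h1, h2⟩
        · rintro ⟨h1 | h1, h2⟩
          · rw [hwr] at h1
            cases Option.some_injective _ h1
            exact absurd hW h2
          · exact ⟨h1, h2⟩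
      · rw [if_neg hW, List.mem_cons, mem_fwo l _, mem_wr_cons]
        constructor
        · rintro (rfl | ⟨h1, h2⟩)
          · exact ⟨Or.inl hwr, hW⟩
          · exact ⟨Or.inr h1, fun hu => h2 (Or.inl hu)⟩
        · rintro ⟨h1 | h1, h2⟩
          · rw [hwr] at h1
            exact Or.inl (Option.some_injective _ h1).symm
          · by_cases hu : u = (k, α)
            · exact Or.inl hu
            · refine Or.inr ⟨h1, ?_⟩
              rintro (h | h)
              · exact h2 h
              · exact hu (by simpa using h)

lemma pairwise_fwo :
    ∀ (ms : List (Move Q D dim)) (W : Set (ℕ × Fin dim)),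
      (fwo W ms).Pairwise (fun a b => fwIdx ms a < fwIdx ms b)
  | [], W => by simp [fwo]
  | m :: l, W => by
    have step : ∀ (W' : Set (ℕ × Fin dim)), (wreg m = none ∨ ∃ r, wreg m = some r ∧ r ∉ fwo W' l) →
        (fwo W' l).Pairwise (fun a b => fwIdx (m :: l) a < fwIdx (m :: l) b) := by
      intro W' hm
      refine (pairwise_fwo l W').imp_of_mem ?_
      intro a b ha hb hab
      have hna : wreg m ≠ some a := by
        rcases hm with h | ⟨r, hr, hrn⟩
        · simp [h]
        · rw [hr]; intro hc; exact hrn (by rw [Option.some_injective _ hc]; exact ha)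
      have hnb : wreg m ≠ some b := by
        rcases hm with h | ⟨r, hr, hrn⟩
        · simp [h]
        · rw [hr]; intro hc; exact hrn (by rw [Option.some_injective _ hc]; exact hb)
      simp only [fwIdx, if_neg hna, if_neg hnb]
      omega
    rcases m with ⟨⟨q, a, q'⟩, k⟩
    cases a with
    | incr =>
      show (fwo W l).Pairwise _
      exact step W (Or.inl rfl)
    | read i α x =>
      show (fwo W l).Pairwise _
      exact step W (Or.inl rfl)
    | write α x =>
      have hwr : wreg (((q, Act.write α x, q'), k) : Move Q D dim) = some (k, α) := rfl
      simp only [fwo]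
      by_cases hW : (k, α) ∈ W
      · rw [if_pos hW]
        refine step W (Or.inr ⟨(k, α), hwr, ?_⟩)
        intro hc
        exact ((mem_fwo l W).1 hc).2 hW
      · rw [if_neg hW]
        refine List.Pairwise.cons ?_ ?_
        · intro b hb
          have hbn : ((k, α) : ℕ × Fin dim) ≠ b := by
            intro hc; exact ((mem_fwo l _).1 hb).2 (by rw [← hc]; exact Or.inr rfl)
          have hne : wreg (((q, Act.write α x, q'), k) : Move Q D dim) ≠ some b := by
            rw [hwr]; intro hc; exact hbn (Option.some_injective _ hc)
          simp [fwIdx, hne, hwr, hbn]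
        · refine step (W ∪ {(k, α)}) (Or.inr ⟨(k, α), hwr, ?_⟩)
          intro hc
          exact ((mem_fwo l _).1 hc).2 (Or.inr rfl)

lemma nodup_fwo (ms : List (Move Q D dim)) (W : Set (ℕ × Fin dim)) : (fwo W ms).Nodup :=
  (pairwise_fwo ms W).imp (by rintro a b h rfl; omega)

section ChainTools

variable {β : Type _} {r : β → β → Prop}

set_option linter.deprecated false in
lemma List.chain_cons {R : β → β → Prop} {a b : β} {l : List β} :
    List.Chain R a (b :: l) ↔ R a b ∧ List.Chain R b l := by
  unfold List.Chain; exact List.isChain_cons_cons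

set_option linter.deprecated false in
@[simp] lemma List.chain_nil_iff {R : β → β → Prop} {a : β} : List.Chain R a [] ↔ True := by
  unfold List.Chain; simp

set_option linter.deprecated false in
lemma List.chain_split {R : β → β → Prop} {a b : β} {l₁ l₂ : List β} :
    List.Chain R a (l₁ ++ b :: l₂) ↔ List.Chain R a (l₁ ++ [b]) ∧ List.Chain R b l₂ := by
  unfold List.Chain; exact List.isChain_cons_split

lemma c2t : ∀ (l : List β) (a b : β), List.Chain r a (l ++ [b]) → Relation.TransGen r a b
  | [], a, b, h => by
    rw [List.nil_append, List.chain_cons] at h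
    exact Relation.TransGen.single h.1
  | c :: l, a, b, h => by
    rw [List.cons_append, List.chain_cons] at h
    exact Relation.TransGen.head h.1 (c2t l c b h.2)

lemma t2c {a b : β} (h : Relation.TransGen r a b) : ∃ l, List.Chain r a (l ++ [b]) := by
  induction h with
  | single hab =>
    refine ⟨[], ?_⟩
    simpa [List.chain_cons] using hab
  | @tail c d _ hcd ih =>
    rcases ih with ⟨l, hl⟩
    refine ⟨l ++ [c], ?_⟩
    have : List.Chain r a (l ++ c :: [d]) :=
      List.chain_split.2 ⟨hl, by simpa [List.chain_cons] using hcd⟩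
    simpa using this
  
lemma chain_mono {r' : β → β → Prop} (hr : ∀ a b, r a b → r' a b) :
    ∀ (l : List β) (a : β), List.Chain r a l → List.Chain r' a l
  | [], a, _ => List.Chain.nil
  | c :: l, a, h => by
    rw [List.chain_cons] at h ⊢
    exact ⟨hr _ _ h.1, chain_mono hr l c h.2⟩

lemma chain_avoid (h : β) (hshort : ∀ w y, r w h → r h y → r w y) :
    ∀ (n : ℕ) (l : List β), l.length ≤ n → ∀ (a b : β), List.Chain r a (l ++ [b]) →
      ∃ l', h ∉ l' ∧ List.Chain r a (l' ++ [b]) := by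
  intro n
  induction n with
  | zero =>
    intro l hl a b hc
    interval_cases hlen : l.length
    · exact ⟨l, by rcases List.length_eq_zero_iff.1 hlen with rfl; simp, hc⟩
  | succ n ih =>
    intro l hl a b hc
    by_cases hmem : h ∈ l
    · rcases List.append_of_mem hmem with ⟨s, t, rfl⟩
      rw [show (s ++ h :: t) ++ [b] = s ++ h :: (t ++ [b]) by simp] at hc
      have hsp := List.chain_split.1 hc
      rcases hsp with ⟨hc1, hc2⟩
      rcases s.eq_nil_or_concat with rfl | ⟨s', w, rfl⟩
      · -- r a h at start
        have hah : r a h := by simpa [List.chain_cons] using hc1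
        cases t with
        | nil =>
          have hhb : r h b := by simpa [List.chain_cons] using hc2
          exact ⟨[], by simp, by simpa [List.chain_cons] using hshort _ _ hah hhb⟩
        | cons y t' =>
          rw [List.cons_append, List.chain_cons] at hc2
          have hay : r a y := hshort _ _ hah hc2.1
          have : List.Chain r a ((y :: t') ++ [b]) := by
            rw [List.cons_append, List.chain_cons]
            exact ⟨hay, hc2.2⟩
          refine ih (y :: t') ?_ a b this
          simp at hl ⊢
          omega
      · -- s = s' ++ [w]
        have hc1' : List.Chain r a (s' ++ w :: [h]) := by simpa using hc1
        rcases List.chain_split.1 hc1' with ⟨hc1a, hc1b⟩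
        have hwh : r w h := by simpa [List.chain_cons] using hc1b
        cases t with
        | nil =>
          have hhb : r h b := by simpa [List.chain_cons] using hc2
          have hwb : r w b := hshort _ _ hwh hhb
          have : List.Chain r a ((s' ++ [w]) ++ [b]) := by
            rw [show (s' ++ [w]) ++ [b] = s' ++ w :: [b] by simp]
            exact List.chain_split.2 ⟨hc1a, by simpa [List.chain_cons] using hwb⟩
          refine ih (s' ++ [w]) ?_ a b this
          simp at hl ⊢
          omega
        | cons y t' =>
          rw [List.cons_append, List.chain_cons] at hc2
          have hwy : r w y := hshort _ _ hwh hc2.1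
          have : List.Chain r a ((s' ++ w :: y :: t') ++ [b]) := by
            rw [show (s' ++ w :: y :: t') ++ [b] = s' ++ w :: (y :: t' ++ [b]) by simp]
            refine List.chain_split.2 ⟨hc1a, ?_⟩
            rw [List.cons_append, List.chain_cons]
            exact ⟨hwy, hc2.2⟩
          refine ih (s' ++ w :: y :: t') ?_ a b this
          simp at hl ⊢
          omega
    · exact ⟨l, hmem, hc⟩

lemma chain_restrict {r' : β → β → Prop} (h : β)
    (hstep : ∀ a b, a ≠ h → b ≠ h → r a b → r' a b) :
    ∀ (l : List β) (a b : β), a ≠ h → b ≠ h → h ∉ l →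
      List.Chain r a (l ++ [b]) → List.Chain r' a (l ++ [b])
  | [], a, b, ha, hb, _, hc => by
    rw [List.nil_append, List.chain_cons] at hc ⊢
    exact ⟨hstep _ _ ha hb hc.1, List.Chain.nil⟩
  | c :: l, a, b, ha, hb, hm, hc => by
    rw [List.cons_append, List.chain_cons] at hc ⊢
    have hch : c ≠ h := fun hx => hm (by simp [hx])
    exact ⟨hstep _ _ ha hch hc.1,
      chain_restrict h hstep l c b hch hb (fun hx => hm (by simp [hx])) hc.2⟩

end ChainTools

/-- strict first-write precedence in list `l` -/
def olt (l : List (Move Q D dim)) (w u : ℕ × Fin dim) : Prop :=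
  w ∈ wr l ∧ u ∈ wr l ∧ fwIdx l w < fwIdx l u

lemma olt_trans {l : List (Move Q D dim)} {a b c : ℕ × Fin dim}
    (h1 : olt l a b) (h2 : olt l b c) : olt l a c :=
  ⟨h1.1, h2.2.1, lt_trans h1.2.2 h2.2.2⟩

/-- the combined precedence relation on registers, restricted to `A` -/
def srel (v : ℕ) (l1 l2 : List (Move Q D dim)) (A : Finset (ℕ × Fin dim))
    (w u : ℕ × Fin dim) : Prop :=
  w ∈ A ∧ u ∈ A ∧ w.1 ≤ u.1 + v ∧ (olt l1 w u ∨ olt l2 w u)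

/-- the two lists have the same written registers and agree on first-write order
within distance-`v` windows -/
def goodpair (v : ℕ) (l1 l2 : List (Move Q D dim)) : Prop :=
  (∀ u, u ∈ wr l1 ↔ u ∈ wr l2) ∧
  (∀ u u', u ∈ wr l1 → u' ∈ wr l1 → u.1 ≤ u'.1 + v → u'.1 ≤ u.1 + v →
    (fwIdx l1 u < fwIdx l1 u' ↔ fwIdx l2 u < fwIdx l2 u'))

lemma srel_irrefl {v : ℕ} {l1 l2 : List (Move Q D dim)} {A : Finset (ℕ × Fin dim)}
    {u : ℕ × Fin dim} : ¬ srel v l1 l2 A u u := by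
  rintro ⟨-, -, -, h | h⟩ <;> exact absurd h.2.2 (lt_irrefl _)

lemma olt_transfer {v : ℕ} {l1 l2 : List (Move Q D dim)} (hg : goodpair v l1 l2)
    {a b : ℕ × Fin dim} (ha : a ∈ wr l1) (hb : b ∈ wr l1)
    (h1 : a.1 ≤ b.1 + v) (h2 : b.1 ≤ a.1 + v) :
    (olt l1 a b ↔ olt l2 a b) := by
  constructor
  · rintro ⟨-, -, h⟩
    exact ⟨(hg.1 a).1 ha, (hg.1 b).1 hb, (hg.2 a b ha hb h1 h2).1 h⟩
  · rintro ⟨-, -, h⟩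
    exact ⟨ha, hb, (hg.2 a b ha hb h1 h2).2 h⟩

lemma srel_shortcut {v : ℕ} {l1 l2 : List (Move Q D dim)} (hg : goodpair v l1 l2)
    {A : Finset (ℕ × Fin dim)} (hA : ∀ u ∈ A, u ∈ wr l1)
    {h : ℕ × Fin dim} (hmax : ∀ u ∈ A, u.1 ≤ h.1)
    {w y : ℕ × Fin dim} (h1 : srel v l1 l2 A w h) (h2 : srel v l1 l2 A h y) :
    srel v l1 l2 A w y := by
  obtain ⟨hwA, hhA, hr1, ho1⟩ := h1
  obtain ⟨-, hyA, hr2, ho2⟩ := h2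
  refine ⟨hwA, hyA, le_trans (le_trans (hmax w hwA) (hmax h hhA)) ?_, ?_⟩
  · exact le_trans (hmax h hhA) hr2  -- w.1 ≤ h.1 ≤ y.1 + v ; fix below
  · -- order part
    have hy1 : y.1 ≤ h.1 := hmax y hyA
    have hwin1 : h.1 ≤ y.1 + v := hr2
    have hwin2 : y.1 ≤ h.1 + v := le_trans hy1 (Nat.le_add_right _ _)
    rcases ho1 with o1 | o1 <;> rcases ho2 with o2 | o2
    · exact Or.inl (olt_trans o1 o2)
    · -- o1 : olt l1 w h, o2 : olt l2 h y
      have hhy1 : olt l1 h y := by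
        refine (olt_transfer hg (hA h hhA) ?_ hwin1 hwin2).2 o2
        exact (hg.1 y).2 o2.2.1
      exact Or.inl (olt_trans o1 hhy1)
    · -- o1 : olt l2 w h, o2 : olt l1 h y
      have hhy2 : olt l2 h y := by
        refine (olt_transfer hg (hA h hhA) (hA y hyA) hwin1 hwin2).1 o2
      exact Or.inr (olt_trans o1 hhy2)
    · exact Or.inr (olt_trans o1 o2)

lemma srel_acyclic {v : ℕ} {l1 l2 : List (Move Q D dim)} (hg : goodpair v l1 l2) :
    ∀ (n : ℕ) (A : Finset (ℕ × Fin dim)), A.card ≤ n → (∀ u ∈ A, u ∈ wr l1) →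
      ∀ u, ¬ Relation.TransGen (srel v l1 l2 A) u u := by
  intro n
  induction n with
  | zero =>
    intro A hcard hA u hcyc
    have : A = ∅ := Finset.card_eq_zero.1 (Nat.le_zero.1 hcard)
    subst this
    cases hcyc with
    | single h => exact absurd h.1 (by simp)
    | tail _ h => exact absurd h.2.1 (by simp)
  | succ n ih =>
    intro A hcard hA u hcyc
    have hne : A.Nonempty := by
      cases hcyc with
      | single h => exact ⟨u, h.1⟩
      | tail _ h => exact ⟨u, h.2.1⟩
    obtain ⟨h, hhA, hmax⟩ := Finset.exists_max_image A Prod.fst hne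
    set S := srel v l1 l2 A with hS
    have hshort : ∀ w y, S w h → S h y → S w y := fun w y a b =>
      srel_shortcut hg hA hmax a b
    -- main argument for cycles not at h
    have aux : ∀ z, z ≠ h → ¬ Relation.TransGen S z z := by
      intro z hz hcz
      obtain ⟨l, hl⟩ := t2c hcz
      obtain ⟨l', hl'h, hl'⟩ := chain_avoid h hshort l.length l le_rfl z z hl
      -- restrict to A.erase h
      have hstep : ∀ a b, a ≠ h → b ≠ h → S a b → srel v l1 l2 (A.erase h) a b := by
        rintro a b ha hb ⟨h1, h2, h3, h4⟩
        exact ⟨Finset.mem_erase.2 ⟨ha, h1⟩, Finset.mem_erase.2 ⟨hb, h2⟩, h3, h4⟩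
      have hchain' : List.Chain (srel v l1 l2 (A.erase h)) z (l' ++ [z]) :=
        chain_restrict h hstep l' z z hz hz hl'h hl'
      have := c2t _ _ _ hchain'
      refine ih (A.erase h) ?_ (fun u hu => hA u (Finset.mem_of_mem_erase hu)) z this
      have := Finset.card_erase_lt_of_mem hhA
      omega
    by_cases hu : u = h
    · rw [hu] at hcyc
      obtain ⟨l, hl⟩ := t2c hcyc
      cases l with
      | nil =>
        rw [List.nil_append, List.chain_cons] at hl
        exact srel_irrefl hl.1
      | cons y l' =>
        rw [List.cons_append, List.chain_cons] at hl
        have hyh : y ≠ h := by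
          intro hc
          subst hc
          exact srel_irrefl hl.1
        exact aux y hyh
          (Relation.TransGen.trans (c2t _ _ _ hl.2) (Relation.TransGen.single hl.1))
    · exact aux u hu hcyc


noncomputable def rankR (v : ℕ) (l1 l2 : List (Move Q D dim)) (u : ℕ × Fin dim) : ℕ :=
  1 + ((wr l1).toFinset.filter
    (fun w => Relation.TransGen (srel v l1 l2 (wr l1).toFinset) w u)).card

lemma rankR_pos {v : ℕ} {l1 l2 : List (Move Q D dim)} {u : ℕ × Fin dim} :
    0 < rankR v l1 l2 u := by simp [rankR]

lemma rankR_lt {v : ℕ} {l1 l2 : List (Move Q D dim)} (hg : goodpair v l1 l2)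
    {u u' : ℕ × Fin dim} (h : srel v l1 l2 (wr l1).toFinset u u') :
    rankR v l1 l2 u < rankR v l1 l2 u' := by
  have hacyc := srel_acyclic hg (wr l1).toFinset.card (wr l1).toFinset le_rfl
    (fun x hx => List.mem_toFinset.1 hx)
  have hsub : ((wr l1).toFinset.filter
      (fun w => Relation.TransGen (srel v l1 l2 (wr l1).toFinset) w u)) ⊂
      ((wr l1).toFinset.filter
      (fun w => Relation.TransGen (srel v l1 l2 (wr l1).toFinset) w u')) := by
    constructor
    · intro w hw
      rw [Finset.mem_filter] at hw ⊢
      exact ⟨hw.1, hw.2.tail h⟩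
    · intro hcon
      have hu : u ∈ (wr l1).toFinset.filter
          (fun w => Relation.TransGen (srel v l1 l2 (wr l1).toFinset) w u') :=
        Finset.mem_filter.2 ⟨h.1, Relation.TransGen.single h⟩
      have := hcon hu
      rw [Finset.mem_filter] at this
      exact hacyc u this.2
  have := Finset.card_lt_card hsub
  simp only [rankR]
  omega

lemma mem_winproj {v k : ℕ} {F : List (ℕ × Fin dim)} {u : ℕ × Fin dim} :
    u ∈ winproj v k F ↔ u ∈ F ∧ k - v ≤ u.1 ∧ u.1 ≤ k := by
  simp [winproj, List.mem_filter, and_assoc]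

lemma pairwise_two {β : Type _} {r s : β → β → Prop} {A : List β} {u u' : β}
    (h1 : A.Pairwise r) (h2 : A.Pairwise s) (hu : u ∈ A) (hu' : u' ∈ A)
    (hr : r u u') (hasym : ¬ r u' u) : s u u' := by
  rcases List.mem_iff_get.1 hu with ⟨i, rfl⟩
  rcases List.mem_iff_get.1 hu' with ⟨j, rfl⟩
  rcases lt_trichotomy i j with hij | hij | hij
  · exact List.pairwise_iff_get.1 h2 i j hij
  · subst hij; exact absurd hr hasym
  · exact absurd (List.pairwise_iff_get.1 h1 j i hij) hasym

lemma winproj_to_goodpair {v : ℕ} {l1 l2 : List (Move Q D dim)}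
    (h : ∀ k, winproj v k (fwo ∅ l1) = winproj v k (fwo ∅ l2)) :
    goodpair v l1 l2 := by
  have hmem : ∀ (l : List (Move Q D dim)) u, u ∈ fwo (∅ : Set (ℕ × Fin dim)) l ↔ u ∈ wr l := by
    intro l u; rw [mem_fwo]; simp
  constructor
  · intro u
    constructor
    · intro hu
      have : u ∈ winproj v u.1 (fwo ∅ l1) :=
        mem_winproj.2 ⟨(hmem l1 u).2 hu, Nat.sub_le _ _, le_rfl⟩
      rw [h u.1] at this
      exact (hmem l2 u).1 (mem_winproj.1 this).1
    · intro hu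
      have : u ∈ winproj v u.1 (fwo ∅ l2) :=
        mem_winproj.2 ⟨(hmem l2 u).2 hu, Nat.sub_le _ _, le_rfl⟩
      rw [← h u.1] at this
      exact (hmem l1 u).1 (mem_winproj.1 this).1
  · have fw : ∀ u u' : ℕ × Fin dim, u ∈ wr l1 → u' ∈ wr l1 → u.1 ≤ u'.1 + v →
        u'.1 ≤ u.1 + v → fwIdx l1 u < fwIdx l1 u' → fwIdx l2 u < fwIdx l2 u' := by
      intro u u' hu hu' h1 h2 hlt
      obtain ⟨k, hk1, hk2, hk3, hk4⟩ :
          ∃ k, u.1 ≤ k ∧ u'.1 ≤ k ∧ k ≤ u.1 + v ∧ k ≤ u'.1 + v :=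
        ⟨max u.1 u'.1, le_max_left _ _, le_max_right _ _, max_le (by omega) h2,
          max_le h1 (by omega)⟩
      have hmu : u ∈ winproj v k (fwo ∅ l1) :=
        mem_winproj.2 ⟨(hmem l1 u).2 hu, by omega, by omega⟩
      have hmu' : u' ∈ winproj v k (fwo ∅ l1) :=
        mem_winproj.2 ⟨(hmem l1 u').2 hu', by omega, by omega⟩
      have hp1 : (winproj v k (fwo ∅ l1)).Pairwise (fun a b => fwIdx l1 a < fwIdx l1 b) :=
        (pairwise_fwo l1 ∅).filter _
      have hp2 : (winproj v k (fwo ∅ l1)).Pairwise (fun a b => fwIdx l2 a < fwIdx l2 b) := by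
        rw [h k]; exact (pairwise_fwo l2 ∅).filter _
      exact pairwise_two (r := fun a b => fwIdx l1 a < fwIdx l1 b)
        (s := fun a b => fwIdx l2 a < fwIdx l2 b) hp1 hp2 hmu hmu' hlt (by omega)
    intro u u' hu hu' h1 h2
    constructor
    · exact fw u u' hu hu' h1 h2
    · intro hlt
      by_contra hcon
      rcases mem_wr.1 hu with ⟨m0, -, -⟩
      rcases Nat.lt_or_ge (fwIdx l1 u') (fwIdx l1 u) with hgt | hge
      · have := fw u' u hu' hu h2 h1 hgt
        omega
      · have heq : fwIdx l1 u = fwIdx l1 u' := by omega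
        have := fwIdx_inj m0 hu hu' heq
        subst this
        omega

lemma goodpair_to_winproj {v : ℕ} {l1 l2 : List (Move Q D dim)}
    (hg : goodpair v l1 l2) :
    ∀ k, winproj v k (fwo ∅ l1) = winproj v k (fwo ∅ l2) := by
  intro k
  have hmem : ∀ (l : List (Move Q D dim)) u, u ∈ fwo (∅ : Set (ℕ × Fin dim)) l ↔ u ∈ wr l := by
    intro l u; rw [mem_fwo]; simp
  haveI : IsAntisymm (ℕ × Fin dim) (fun a b => fwIdx l1 a < fwIdx l1 b) :=
    ⟨fun a b h1 h2 => absurd h2 (by omega)⟩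
  refine (fun hp hs1 hs2 => List.Perm.eq_of_pairwise' (r := fun a b => fwIdx l1 a < fwIdx l1 b) hs1 hs2 hp) ?_ ?_ ?_
  · refine (List.perm_ext_iff_of_nodup
      ((nodup_fwo l1 ∅).filter _) ((nodup_fwo l2 ∅).filter _)).2 ?_
    intro a
    show a ∈ winproj v k (fwo ∅ l1) ↔ a ∈ winproj v k (fwo ∅ l2)
    rw [mem_winproj, mem_winproj, hmem, hmem, hg.1 a]
  · exact (pairwise_fwo l1 ∅).filter _
  · refine ((pairwise_fwo l2 ∅).filter _).imp_of_mem ?_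
    intro a b ha hb hab
    have ha' := mem_winproj.1 ha
    have hb' := mem_winproj.1 hb
    have ha2 : a ∈ wr l2 := (hmem l2 a).1 ha'.1
    have hb2 : b ∈ wr l2 := (hmem l2 b).1 hb'.1
    have ha1 : a ∈ wr l1 := (hg.1 a).2 ha2
    have hb1 : b ∈ wr l1 := (hg.1 b).2 hb2
    exact (hg.2 a b ha1 hb1 (by omega) (by omega)).2 hab


section Events

def junkm (P : Protocol Q D dim) : Move Q D dim := ((P.q0, Act.incr, P.q0), 0)

def msb (ms1 ms2 : List (Move Q D dim)) : Bool → List (Move Q D dim) :=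
  fun b => cond b ms2 ms1

def emv (P : Protocol Q D dim) (ms1 ms2 : List (Move Q D dim)) (e : Bool × ℕ) :
    Move Q D dim := (msb ms1 ms2 e.1).getD e.2 (junkm P)

def eround (P : Protocol Q D dim) (ms1 ms2 : List (Move Q D dim)) (e : Bool × ℕ) : ℕ :=
  (emv P ms1 ms2 e).2

noncomputable def gfun (P : Protocol Q D dim) (ms1 ms2 : List (Move Q D dim))
    (e : Bool × ℕ) : ℕ :=
  ((wr ms1).toFinset.filter (fun u =>
    u ∈ wr (msb ms1 ms2 e.1) ∧ fwIdx (msb ms1 ms2 e.1) u ≤ e.2 ∧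
      u.1 ≤ eround P ms1 ms2 e)).sup (rankR P.v ms1 ms2)

def Klen (ms1 ms2 : List (Move Q D dim)) : ℕ := ms1.length + ms2.length + 1

noncomputable def keyN (P : Protocol Q D dim) (ms1 ms2 : List (Move Q D dim))
    (e : Bool × ℕ) : ℕ :=
  (2 * gfun P ms1 ms2 e + cond e.1 1 0) * Klen ms1 ms2 + e.2

def evs (ms1 ms2 : List (Move Q D dim)) : List (Bool × ℕ) :=
  ((List.range ms1.length).map (fun t => (false, t))) ++
  ((List.range ms2.length).map (fun t => (true, t)))

noncomputable def sevs (P : Protocol Q D dim) (ms1 ms2 : List (Move Q D dim)) :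
    List (Bool × ℕ) :=
  (evs ms1 ms2).insertionSort (fun e e' => keyN P ms1 ms2 e ≤ keyN P ms1 ms2 e')

noncomputable def mlist (P : Protocol Q D dim) (ms1 ms2 : List (Move Q D dim)) :
    List (Move Q D dim) := (sevs P ms1 ms2).map (emv P ms1 ms2)

variable {P : Protocol Q D dim} {ms1 ms2 : List (Move Q D dim)}

lemma mem_evs {e : Bool × ℕ} :
    e ∈ evs ms1 ms2 ↔ e.2 < (msb ms1 ms2 e.1).length := by
  rcases e with ⟨b, t⟩
  cases b <;> simp [evs, msb]

lemma nodup_evs : (evs ms1 ms2).Nodup := by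
  refine List.Nodup.append ?_ ?_ ?_
  · exact (List.nodup_range).map (fun a b h => by simpa using h)
  · exact (List.nodup_range).map (fun a b h => by simpa using h)
  · intro e he1 he2
    simp only [List.mem_map, List.mem_range] at he1 he2
    rcases he1 with ⟨t, -, rfl⟩
    rcases he2 with ⟨t', -, h⟩
    simpa using h

lemma lt_Klen {b : Bool} : (msb ms1 ms2 b).length < Klen ms1 ms2 := by
  cases b <;> simp [msb, Klen] <;> omega

lemma mulKey_lt {A A' t t' K : ℕ} (ht : t < K)
    (h : A < A' ∨ (A = A' ∧ t < t')) : A * K + t < A' * K + t' := by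
  rcases h with h | ⟨rfl, h⟩
  · have h1 : A * K + K ≤ A' * K := by
      have := Nat.mul_le_mul_right K (Nat.succ_le_of_lt h)
      simpa [Nat.succ_mul] using this
    have h2 : A * K + t < A * K + K := Nat.add_lt_add_left ht _
    omega
  · exact Nat.add_lt_add_left h _

lemma mulKey_inj {A A' t t' K : ℕ} (ht : t < K) (ht' : t' < K)
    (h : A * K + t = A' * K + t') : A = A' ∧ t = t' := by
  have hK : 0 < K := Nat.pos_of_ne_zero (by rintro rfl; omega)
  have e1 : (A * K + t) % K = t := by
    rw [Nat.mul_comm, Nat.mul_add_mod]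
    exact Nat.mod_eq_of_lt ht
  have e2 : (A' * K + t') % K = t' := by
    rw [Nat.mul_comm, Nat.mul_add_mod]
    exact Nat.mod_eq_of_lt ht'
  have htt : t = t' := by rw [← e1, ← e2, h]
  subst htt
  have : A * K = A' * K := by omega
  exact ⟨Nat.eq_of_mul_eq_mul_right hK this, rfl⟩

lemma keyN_lt_of {e e' : Bool × ℕ} (ht : e.2 < Klen ms1 ms2)
    (h : gfun P ms1 ms2 e < gfun P ms1 ms2 e' ∨
      (gfun P ms1 ms2 e = gfun P ms1 ms2 e' ∧ e.1 = e'.1 ∧ e.2 < e'.2)) :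
    keyN P ms1 ms2 e < keyN P ms1 ms2 e' := by
  unfold keyN
  refine mulKey_lt ht ?_
  rcases h with h | ⟨hg, hb, hlt⟩
  · left
    have hc : (cond e.1 1 0 : ℕ) ≤ 1 := by cases e.1 <;> simp
    have hc' : (0 : ℕ) ≤ cond e'.1 1 0 := Nat.zero_le _
    omega
  · right
    rw [hg, hb]
    exact ⟨rfl, hlt⟩

lemma keyN_inj {e e' : Bool × ℕ} (hv : e ∈ evs ms1 ms2) (hv' : e' ∈ evs ms1 ms2)
    (h : keyN P ms1 ms2 e = keyN P ms1 ms2 e') : e = e' := by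
  have ht : e.2 < Klen ms1 ms2 := lt_trans (mem_evs.1 hv) lt_Klen
  have ht' : e'.2 < Klen ms1 ms2 := lt_trans (mem_evs.1 hv') lt_Klen
  obtain ⟨hA, htt⟩ := mulKey_inj ht ht' h
  have hbb : e.1 = e'.1 := by
    by_contra hne
    cases hb : e.1 <;> cases hb' : e'.1 <;> rw [hb, hb'] at hA hne <;> simp at hA hne <;> omega
  exact Prod.ext hbb htt

end Events

variable {P : Protocol Q D dim} {ms1 ms2 : List (Move Q D dim)}

lemma gfun_mono {b : Bool} {s t : ℕ} (hst : s ≤ t)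
    (hr : eround P ms1 ms2 (b, s) ≤ eround P ms1 ms2 (b, t)) :
    gfun P ms1 ms2 (b, s) ≤ gfun P ms1 ms2 (b, t) := by
  refine Finset.sup_mono ?_
  intro u hu
  rw [Finset.mem_filter] at hu ⊢
  exact ⟨hu.1, hu.2.1, le_trans hu.2.2.1 hst, le_trans hu.2.2.2 hr⟩

lemma keyN_lt_same {b : Bool} {s t : ℕ} (hst : s < t) (ht : t < (msb ms1 ms2 b).length)
    (hr : eround P ms1 ms2 (b, s) ≤ eround P ms1 ms2 (b, t)) :
    keyN P ms1 ms2 (b, s) < keyN P ms1 ms2 (b, t) := by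
  have hg := gfun_mono (P := P) (le_of_lt hst) hr
  have hsK : s < Klen ms1 ms2 := by
    have := lt_Klen (ms1 := ms1) (ms2 := ms2) (b := b)
    omega
  rcases lt_or_eq_of_le hg with h | h
  · exact keyN_lt_of hsK (Or.inl h)
  · exact keyN_lt_of hsK (Or.inr ⟨h, rfl, hst⟩)

lemma mem_wr_msb (hg : goodpair P.v ms1 ms2) {u : ℕ × Fin dim} (hu1 : u ∈ wr ms1)
    (b : Bool) : u ∈ wr (msb ms1 ms2 b) := by
  cases b
  · exact hu1
  · exact (hg.1 u).1 hu1

lemma keyN_rb_lt_write (hg : goodpair P.v ms1 ms2) {b b' : Bool} {t s : ℕ}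
    {u : ℕ × Fin dim}
    (ht : t < (msb ms1 ms2 b).length)
    (hu1 : u ∈ wr ms1)
    (hfw : t < fwIdx (msb ms1 ms2 b) u)
    (hwin : eround P ms1 ms2 (b, t) ≤ u.1 + P.v)
    (hw : wreg (emv P ms1 ms2 (b', s)) = some u)
    (hs : s < (msb ms1 ms2 b').length) :
    keyN P ms1 ms2 (b, t) < keyN P ms1 ms2 (b', s) := by
  have hub : u ∈ wr (msb ms1 ms2 b) := mem_wr_msb hg hu1 b
  have hgl : gfun P ms1 ms2 (b, t) < rankR P.v ms1 ms2 u := by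
    rw [gfun]
    refine (Finset.sup_lt_iff (rankR_pos (v := P.v) (l1 := ms1) (l2 := ms2) (u := u))).2 ?_
    intro w hw'
    rw [Finset.mem_filter] at hw'
    obtain ⟨hwR, hwb, hwidx, hwround⟩ := hw'
    refine rankR_lt hg ⟨hwR, List.mem_toFinset.2 hu1, le_trans hwround hwin, ?_⟩
    have holt : olt (msb ms1 ms2 b) w u := ⟨hwb, hub, lt_of_le_of_lt hwidx hfw⟩
    cases b
    · exact Or.inl holt
    · exact Or.inr holt
  have hgr : rankR P.v ms1 ms2 u ≤ gfun P ms1 ms2 (b', s) := by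
    refine Finset.le_sup ?_
    rw [Finset.mem_filter]
    have hmem : emv P ms1 ms2 (b', s) ∈ msb ms1 ms2 b' := by
      rw [show emv P ms1 ms2 (b', s) = (msb ms1 ms2 b').getD s (junkm P) from rfl,
        List.getD_eq_getElem _ _ hs]
      exact List.getElem_mem hs
    refine ⟨List.mem_toFinset.2 hu1, mem_wr.2 ⟨_, hmem, hw⟩, ?_, ?_⟩
    · exact fwIdx_le (junkm P) hs hw
    · exact le_of_eq (wreg_round hw).symm
  have htK : t < Klen ms1 ms2 := lt_trans ht lt_Klen
  exact keyN_lt_of htK (Or.inl (lt_of_lt_of_le hgl hgr))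

lemma gfun_fw (hg : goodpair P.v ms1 ms2) {b : Bool} {u : ℕ × Fin dim}
    (hu1 : u ∈ wr ms1) :
    gfun P ms1 ms2 (b, fwIdx (msb ms1 ms2 b) u) = rankR P.v ms1 ms2 u := by
  have hub : u ∈ wr (msb ms1 ms2 b) := mem_wr_msb hg hu1 b
  have hround : eround P ms1 ms2 (b, fwIdx (msb ms1 ms2 b) u) = u.1 :=
    fwIdx_round (junkm P) hub
  apply le_antisymm
  · refine Finset.sup_le ?_
    intro w hw'
    rw [Finset.mem_filter] at hw'
    obtain ⟨hwR, hwb, hwidx, hwround⟩ := hw'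
    by_cases hwu : w = u
    · subst hwu; exact le_rfl
    · have hlt : fwIdx (msb ms1 ms2 b) w < fwIdx (msb ms1 ms2 b) u :=
        lt_of_le_of_ne hwidx (fun hc => hwu (fwIdx_inj (junkm P) hwb hub hc))
      refine le_of_lt (rankR_lt hg ⟨hwR, List.mem_toFinset.2 hu1, ?_, ?_⟩)
      · rw [hround] at hwround; omega
      · have holt : olt (msb ms1 ms2 b) w u := ⟨hwb, hub, hlt⟩
        cases b
        · exact Or.inl holt
        · exact Or.inr holt
  · refine Finset.le_sup ?_
    rw [Finset.mem_filter]
    exact ⟨List.mem_toFinset.2 hu1, hub, le_rfl, le_of_eq hround.symm⟩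

lemma sevs_sorted :
    (sevs P ms1 ms2).Pairwise (fun e e' => keyN P ms1 ms2 e ≤ keyN P ms1 ms2 e') := by
  haveI : IsTotal (Bool × ℕ) (fun e e' => keyN P ms1 ms2 e ≤ keyN P ms1 ms2 e') :=
    ⟨fun a b => le_total _ _⟩
  haveI : IsTrans (Bool × ℕ) (fun e e' => keyN P ms1 ms2 e ≤ keyN P ms1 ms2 e') :=
    ⟨fun a b c => le_trans⟩
  exact List.pairwise_insertionSort _ _

lemma sevs_perm : (sevs P ms1 ms2).Perm (evs ms1 ms2) := List.perm_insertionSort _ _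

lemma sevs_nodup : (sevs P ms1 ms2).Nodup :=
  (sevs_perm (P := P)).nodup_iff.2 nodup_evs

lemma sevs_mem {e : Bool × ℕ} : e ∈ sevs P ms1 ms2 ↔ e ∈ evs ms1 ms2 :=
  (sevs_perm (P := P)).mem_iff

lemma sevs_strict {i j : ℕ} (hi : i < (sevs P ms1 ms2).length)
    (hj : j < (sevs P ms1 ms2).length) (hij : i < j) :
    keyN P ms1 ms2 ((sevs P ms1 ms2)[i]) < keyN P ms1 ms2 ((sevs P ms1 ms2)[j]) := by
  have hle := List.pairwise_iff_getElem.1 (sevs_sorted (P := P) (ms1 := ms1) (ms2 := ms2))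
    i j hi hj hij
  rcases lt_or_eq_of_le hle with h | h
  · exact h
  · exfalso
    have hei : (sevs P ms1 ms2)[i] ∈ evs ms1 ms2 := sevs_mem.1 (List.getElem_mem hi)
    have hej : (sevs P ms1 ms2)[j] ∈ evs ms1 ms2 := sevs_mem.1 (List.getElem_mem hj)
    have := keyN_inj hei hej h
    rw [(sevs_nodup (P := P)).getElem_inj_iff] at this
    omega

lemma mem_take_of_key_lt {n : ℕ} (hn : n < (sevs P ms1 ms2).length) {e : Bool × ℕ}
    (he : e ∈ evs ms1 ms2)
    (hk : keyN P ms1 ms2 e < keyN P ms1 ms2 ((sevs P ms1 ms2)[n])) :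
    e ∈ (sevs P ms1 ms2).take n := by
  obtain ⟨m, hm, hme⟩ := List.mem_iff_getElem.1 ((sevs_mem (P := P) (ms1 := ms1) (ms2 := ms2)).2 he)
  subst hme
  rcases lt_trichotomy m n with h | h | h
  · have hlen : m < ((sevs P ms1 ms2).take n).length := by
      rw [List.length_take]; omega
    have : ((sevs P ms1 ms2).take n)[m] = (sevs P ms1 ms2)[m] := List.getElem_take
    rw [← this]
    exact List.getElem_mem hlen
  · subst h; omega
  · have := sevs_strict hn hm h; omega

lemma key_lt_of_mem_take {n : ℕ} (hn : n < (sevs P ms1 ms2).length) {e : Bool × ℕ}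
    (he : e ∈ (sevs P ms1 ms2).take n) :
    keyN P ms1 ms2 e < keyN P ms1 ms2 ((sevs P ms1 ms2)[n]) ∧ e ∈ evs ms1 ms2 := by
  obtain ⟨m, hm, hme⟩ := List.mem_iff_getElem.1 he
  have hmn : m < n := by
    rw [List.length_take] at hm; omega
  have hms : m < (sevs P ms1 ms2).length := by
    rw [List.length_take] at hm; omega
  have : ((sevs P ms1 ms2).take n)[m] = (sevs P ms1 ms2)[m] := List.getElem_take
  rw [this] at hme
  subst hme
  exact ⟨sevs_strict hms hn hmn, sevs_mem.1 (List.getElem_mem hms)⟩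

variable {P : Protocol Q D dim} {ms1 ms2 : List (Move Q D dim)}

lemma foldl_take_succ {l : List (Move Q D dim)} {n : ℕ} (hn : n < l.length)
    (σ0 : Abs Q dim) (d : Move Q D dim) :
    (l.take (n + 1)).foldl absNext σ0 =
      absNext ((l.take n).foldl absNext σ0) (l.getD n d) := by
  rw [List.getD_eq_getElem _ _ hn, List.take_succ, List.getElem?_eq_getElem hn,
    Option.toList_some, List.foldl_append, List.foldl_cons, List.foldl_nil]

lemma combined_step (hg : goodpair P.v ms1 ms2) {σ1 σ2 : Abs Q dim}
    (h1 : AbsRun P (Abs.init P) ms1 σ1) (h2 : AbsRun P (Abs.init P) ms2 σ2) :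
    ∀ n, n < (mlist P ms1 ms2).length →
      AbsStep P (((mlist P ms1 ms2).take n).foldl absNext (Abs.init P))
        ((mlist P ms1 ms2).getD n (junkm P))
        (((mlist P ms1 ms2).take (n + 1)).foldl absNext (Abs.init P)) := by
  intro n hn
  have hnSE : n < (sevs P ms1 ms2).length := by simpa [mlist] using hn
  set SE := sevs P ms1 ms2 with hSE
  set L := mlist P ms1 ms2 with hL
  set e := SE[n] with he
  have heval : e ∈ evs ms1 ms2 := sevs_mem.1 (List.getElem_mem hnSE)
  have htlen : e.2 < (msb ms1 ms2 e.1).length := mem_evs.1 heval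
  have hLn : L.getD n (junkm P) = emv P ms1 ms2 e := by
    rw [List.getD_eq_getElem _ _ hn]
    simp only [hL, mlist, ← hSE, List.getElem_map, ← he]
  obtain ⟨σf, hstream⟩ : ∃ σf, AbsRun P (Abs.init P) (msb ms1 ms2 e.1) σf := by
    cases hb : e.1
    · exact ⟨σ1, h1⟩
    · exact ⟨σ2, h2⟩
  have horig := run_steps hstream (junkm P) e.2 htlen
  set σb := (((msb ms1 ms2 e.1).take e.2).foldl absNext (Abs.init P)) with hσb
  set σc := ((L.take n).foldl absNext (Abs.init P)) with hσc
  have hmap : L.take n = (SE.take n).map (emv P ms1 ms2) := by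
    simp only [hL, mlist, ← hSE, List.map_take]
  have hprefix : ∀ e', e' ∈ evs ms1 ms2 → keyN P ms1 ms2 e' < keyN P ms1 ms2 e →
      emv P ms1 ms2 e' ∈ L.take n := by
    intro e' hv hk
    have hmem := mem_take_of_key_lt hnSE hv (by rw [he] at hk; exact hk)
    rw [hmap]
    exact List.mem_map_of_mem hmem
  have hStrans : ∀ ℓ : Q × ℕ, ℓ ∈ σb.S → ℓ.2 ≤ eround P ms1 ms2 e → ℓ ∈ σc.S := by
    intro ℓ hmem hround
    rw [hσb, foldl_S] at hmem
    rw [hσc, foldl_S]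
    rcases hmem with hmem | hmem
    · exact Or.inl hmem
    · obtain ⟨m, hm, hprod⟩ := hmem
      obtain ⟨s, hs, hms⟩ := List.mem_iff_getElem.1 hm
      have hst : s < e.2 := by rw [List.length_take] at hs; omega
      have hslen : s < (msb ms1 ms2 e.1).length := lt_trans hst htlen
      have hmeq : emv P ms1 ms2 (e.1, s) = m := by
        rw [← hms, List.getElem_take]
        show (msb ms1 ms2 e.1).getD s (junkm P) = _
        rw [List.getD_eq_getElem _ _ hslen]
      have hround' : eround P ms1 ms2 (e.1, s) ≤ eround P ms1 ms2 e := by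
        have h1' := prodLoc_round m
        rw [hprod] at h1'
        have : (emv P ms1 ms2 (e.1, s)).2 ≤ ℓ.2 := by rw [hmeq]; exact h1'
        exact le_trans this hround
      have hkey : keyN P ms1 ms2 (e.1, s) < keyN P ms1 ms2 e :=
        keyN_lt_same hst htlen hround'
      have hv' : (e.1, s) ∈ evs ms1 ms2 := mem_evs.2 hslen
      right
      exact ⟨emv P ms1 ms2 (e.1, s), hprefix (e.1, s) hv' hkey, by rw [hmeq]; exact hprod⟩
  have hWtrans : ∀ u : ℕ × Fin dim, u ∈ σb.W → u.1 ≤ eround P ms1 ms2 e → u ∈ σc.W := by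
    intro u hmem hround
    rw [hσb, foldl_W] at hmem
    rw [hσc, foldl_W]
    rcases hmem with hmem | hmem
    · exact Or.inl hmem
    · obtain ⟨m, hm, hwm⟩ := hmem
      obtain ⟨s, hs, hms⟩ := List.mem_iff_getElem.1 hm
      have hst : s < e.2 := by rw [List.length_take] at hs; omega
      have hslen : s < (msb ms1 ms2 e.1).length := lt_trans hst htlen
      have hmeq : emv P ms1 ms2 (e.1, s) = m := by
        rw [← hms, List.getElem_take]
        show (msb ms1 ms2 e.1).getD s (junkm P) = _
        rw [List.getD_eq_getElem _ _ hslen]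
      have hround' : eround P ms1 ms2 (e.1, s) ≤ eround P ms1 ms2 e := by
        have h1' : m.2 = u.1 := wreg_round hwm
        have : (emv P ms1 ms2 (e.1, s)).2 = u.1 := by rw [hmeq]; exact h1'
        rw [show eround P ms1 ms2 (e.1, s) = (emv P ms1 ms2 (e.1, s)).2 from rfl, this]
        exact hround
      have hkey : keyN P ms1 ms2 (e.1, s) < keyN P ms1 ms2 e :=
        keyN_lt_same hst htlen hround'
      have hv' : (e.1, s) ∈ evs ms1 ms2 := mem_evs.2 hslen
      right
      exact ⟨emv P ms1 ms2 (e.1, s), hprefix (e.1, s) hv' hkey, by rw [hmeq]; exact hwm⟩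
  have hWblank : ∀ u : ℕ × Fin dim, u ∉ σb.W →
      eround P ms1 ms2 e ≤ u.1 + P.v → wreg (emv P ms1 ms2 e) = none → u ∉ σc.W := by
    intro u hnW hwin hrd hmem
    rw [hσc, foldl_W] at hmem
    rcases hmem with hmem | hmem
    · simp [Abs.init] at hmem
    · obtain ⟨m, hm, hwm⟩ := hmem
      rw [hmap, List.mem_map] at hm
      obtain ⟨e', he', hme'⟩ := hm
      obtain ⟨hk', hv'⟩ := key_lt_of_mem_take hnSE he'
      have hk'' : keyN P ms1 ms2 e' < keyN P ms1 ms2 e := by rw [he]; exact hk'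
      have hs'len : e'.2 < (msb ms1 ms2 e'.1).length := mem_evs.1 hv'
      have hwm' : wreg (emv P ms1 ms2 e') = some u := by rw [hme']; exact hwm
      have humem : emv P ms1 ms2 e' ∈ msb ms1 ms2 e'.1 := by
        show (msb ms1 ms2 e'.1).getD e'.2 (junkm P) ∈ _
        rw [List.getD_eq_getElem _ _ hs'len]
        exact List.getElem_mem hs'len
      have hu1 : u ∈ wr ms1 := by
        have hub' : u ∈ wr (msb ms1 ms2 e'.1) := mem_wr.2 ⟨_, humem, hwm'⟩
        cases hb' : e'.1
        · rw [hb'] at hub'; exact hub'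
        · rw [hb'] at hub'; exact (hg.1 u).2 hub'
      have hfw : e.2 < fwIdx (msb ms1 ms2 e.1) u := by
        have hge : e.2 + 1 ≤ fwIdx (msb ms1 ms2 e.1) u := by
          refine fwIdx_ge (junkm P) ?_ (by omega)
          intro s hs hcon
          rcases Nat.lt_or_ge s e.2 with hs' | hs'
          · apply hnW
            rw [hσb, foldl_W]
            right
            have hslen : s < (msb ms1 ms2 e.1).length := lt_trans hs' htlen
            refine ⟨(msb ms1 ms2 e.1).getD s (junkm P), ?_, hcon⟩
            rw [List.getD_eq_getElem _ _ hslen]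
            have hlt : s < ((msb ms1 ms2 e.1).take e.2).length := by
              rw [List.length_take]; omega
            rw [show (msb ms1 ms2 e.1)[s] = ((msb ms1 ms2 e.1).take e.2)[s]
              from (List.getElem_take).symm]
            exact List.getElem_mem hlt
          · have hse : s = e.2 := by omega
            rw [hse] at hcon
            rw [show (msb ms1 ms2 e.1).getD e.2 (junkm P) = emv P ms1 ms2 e from rfl,
              hrd] at hcon
            simp at hcon
        omega
      have hkgt : keyN P ms1 ms2 e < keyN P ms1 ms2 e' :=
        keyN_rb_lt_write hg htlen hu1 hfw hwin hwm' hs'len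
      omega
  -- now do the step case analysis
  rw [foldl_take_succ hn _ (junkm P), hLn, ← hσc]
  rcases hmv : emv P ms1 ms2 e with ⟨⟨q, a, q'⟩, k⟩
  have heround : eround P ms1 ms2 e = k := by
    rw [show eround P ms1 ms2 e = (emv P ms1 ms2 e).2 from rfl, hmv]
  rw [show (msb ms1 ms2 e.1).getD e.2 (junkm P) = emv P ms1 ms2 e from rfl] at horig
  rw [hmv] at horig
  obtain ⟨σb2, horig⟩ : ∃ x, AbsStep P σb ((q, a, q'), k) x := ⟨_, horig⟩
  cases horig with
  | incr hT hS =>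
    have hstep' : AbsStep P σc ((q, Act.incr, q'), k) ⟨σc.S ∪ {(q', k + 1)}, σc.W⟩ :=
      AbsStep.incr hT (hStrans _ hS (le_of_eq heround.symm))
    exact (step_absNext hstep') ▸ hstep'
  | readBlank hT hS hB =>
    rename_i i α
    have hstep' : AbsStep P σc ((q, Act.read i α P.d0, q'), k) ⟨σc.S ∪ {(q', k)}, σc.W⟩ := by
      refine AbsStep.readBlank hT (hStrans _ hS (le_of_eq heround.symm)) ?_
      intro hik
      refine hWblank (k - i, α) (hB hik) ?_ ?_
      · have hiv : i ≤ P.v := P.read_le _ _ _ _ _ hT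
        rw [heround]
        omega
      · rw [hmv]
        rfl
    exact (step_absNext hstep') ▸ hstep'
  | readVal hx hT hS hik hW hT2 hS1 hS2 =>
    rename_i q1 q2 i α x
    have hstep' : AbsStep P σc ((q, Act.read i α x, q'), k) ⟨σc.S ∪ {(q', k)}, σc.W⟩ := by
      refine AbsStep.readVal hx hT (hStrans _ hS (le_of_eq heround.symm)) hik
        (hWtrans _ hW ?_) hT2 (hStrans _ hS1 ?_) (hStrans _ hS2 ?_) <;>
        (rw [heround]; omega)
    exact (step_absNext hstep') ▸ hstep'
  | write hT hS =>
    rename_i α x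
    have hstep' : AbsStep P σc ((q, Act.write α x, q'), k)
        ⟨σc.S ∪ {(q', k)}, σc.W ∪ {(k, α)}⟩ :=
      AbsStep.write hT (hStrans _ hS (le_of_eq heround.symm))
    exact (step_absNext hstep') ▸ hstep'

variable {P : Protocol Q D dim} {ms1 ms2 : List (Move Q D dim)}

lemma emv_mem {e : Bool × ℕ} (he : e.2 < (msb ms1 ms2 e.1).length) :
    emv P ms1 ms2 e ∈ msb ms1 ms2 e.1 := by
  show (msb ms1 ms2 e.1).getD e.2 (junkm P) ∈ _
  rw [List.getD_eq_getElem _ _ he]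
  exact List.getElem_mem he

lemma mem_mlist {m : Move Q D dim} :
    m ∈ mlist P ms1 ms2 ↔ m ∈ ms1 ∨ m ∈ ms2 := by
  rw [mlist, List.mem_map]
  constructor
  · rintro ⟨e, he, rfl⟩
    have hv := mem_evs.1 (sevs_mem.1 he)
    have := emv_mem (P := P) hv
    cases hb : e.1
    · rw [hb] at this; exact Or.inl this
    · rw [hb] at this; exact Or.inr this
  · rintro (hm | hm)
    · obtain ⟨s, hs, rfl⟩ := List.mem_iff_getElem.1 hm
      refine ⟨(false, s), sevs_mem.2 (mem_evs.2 hs), ?_⟩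
      exact List.getD_eq_getElem ms1 (junkm P) hs
    · obtain ⟨s, hs, rfl⟩ := List.mem_iff_getElem.1 hm
      refine ⟨(true, s), sevs_mem.2 (mem_evs.2 hs), ?_⟩
      exact List.getD_eq_getElem ms2 (junkm P) hs

lemma gfun_ge_of_write {b' : Bool} {s : ℕ} {u : ℕ × Fin dim} (hu1 : u ∈ wr ms1)
    (hw : wreg (emv P ms1 ms2 (b', s)) = some u) (hs : s < (msb ms1 ms2 b').length) :
    rankR P.v ms1 ms2 u ≤ gfun P ms1 ms2 (b', s) := by
  refine Finset.le_sup ?_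
  rw [Finset.mem_filter]
  refine ⟨List.mem_toFinset.2 hu1, mem_wr.2 ⟨_, emv_mem (P := P) hs, hw⟩, ?_, ?_⟩
  · exact fwIdx_le (junkm P) hs hw
  · exact le_of_eq (wreg_round hw).symm

lemma mem_wr_mlist {u : ℕ × Fin dim} (hg : goodpair P.v ms1 ms2) :
    u ∈ wr (mlist P ms1 ms2) ↔ u ∈ wr ms1 := by
  rw [mem_wr]
  constructor
  · rintro ⟨m, hm, hw⟩
    rcases mem_mlist.1 hm with h | h
    · exact mem_wr.2 ⟨m, h, hw⟩
    · exact (hg.1 u).2 (mem_wr.2 ⟨m, h, hw⟩)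
  · intro hu
    rcases mem_wr.1 hu with ⟨m, hm, hw⟩
    exact ⟨m, mem_mlist.2 (Or.inl hm), hw⟩

lemma fwIdx_mlist_lt (hg : goodpair P.v ms1 ms2) {u u' : ℕ × Fin dim}
    (hu : u ∈ wr ms1) (hu' : u' ∈ wr ms1)
    (hrank : rankR P.v ms1 ms2 u < rankR P.v ms1 ms2 u') :
    fwIdx (mlist P ms1 ms2) u < fwIdx (mlist P ms1 ms2) u' := by
  have key : ∀ s, s < (mlist P ms1 ms2).length →
      wreg ((mlist P ms1 ms2).getD s (junkm P)) = some u' →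
      fwIdx (mlist P ms1 ms2) u < s := by
    intro s hs hws
    have hsSE : s < (sevs P ms1 ms2).length := by simpa [mlist] using hs
    have hgetm : (mlist P ms1 ms2).getD s (junkm P) = emv P ms1 ms2 ((sevs P ms1 ms2)[s]) := by
      rw [List.getD_eq_getElem _ _ hs]
      simp [mlist]
    rw [hgetm] at hws
    set e' := (sevs P ms1 ms2)[s] with he'
    have hv' : e' ∈ evs ms1 ms2 := sevs_mem.1 (List.getElem_mem hsSE)
    have hge : rankR P.v ms1 ms2 u' ≤ gfun P ms1 ms2 e' :=
      gfun_ge_of_write hu' hws (mem_evs.1 hv')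
    -- the first-write event of u in stream 1
    have hufw : fwIdx ms1 u < ms1.length := fwIdx_lt_length hu
    have hew : (false, fwIdx ms1 u) ∈ evs ms1 ms2 := mem_evs.2 hufw
    have hgf : gfun P ms1 ms2 (false, fwIdx ms1 u) = rankR P.v ms1 ms2 u := by
      have := gfun_fw (b := false) hg hu
      exact this
    have hkey : keyN P ms1 ms2 (false, fwIdx ms1 u) < keyN P ms1 ms2 e' := by
      refine keyN_lt_of ?_ (Or.inl ?_)
      · show fwIdx ms1 u < Klen ms1 ms2
        have : (msb ms1 ms2 false).length < Klen ms1 ms2 := lt_Klen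
        exact lt_trans hufw this
      · rw [hgf]
        exact lt_of_lt_of_le hrank hge
    -- position of the first-write event
    obtain ⟨m0, hm0, hm0e⟩ :=
      List.mem_iff_getElem.1 ((sevs_mem (P := P) (ms1 := ms1) (ms2 := ms2)).2 hew)
    have hm0s : m0 < s := by
      rcases lt_trichotomy m0 s with h | h | h
      · exact h
      · exfalso
        subst h
        rw [← he'] at hm0e
        rw [hm0e] at hkey
        omega
      · exfalso
        have hss := sevs_strict hsSE hm0 h
        rw [hm0e, ← he'] at hss
        omega
    have hm0L : m0 < (mlist P ms1 ms2).length := by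
      simpa [mlist] using lt_trans hm0s hsSE
    have hwm0 : wreg ((mlist P ms1 ms2).getD m0 (junkm P)) = some u := by
      rw [List.getD_eq_getElem _ _ hm0L]
      have : (mlist P ms1 ms2)[m0] = emv P ms1 ms2 ((sevs P ms1 ms2)[m0]) := by
        simp [mlist]
      rw [this, hm0e]
      show wreg ((msb ms1 ms2 false).getD (fwIdx ms1 u) (junkm P)) = some u
      exact fwIdx_writes (junkm P) hu
    exact lt_of_le_of_lt (fwIdx_le (junkm P) hm0L hwm0) hm0s
  have huL : u' ∈ wr (mlist P ms1 ms2) := (mem_wr_mlist hg).2 hu'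
  exact key _ (fwIdx_lt_length huL) (fwIdx_writes (junkm P) huL)

lemma goodpair_mlist (hg : goodpair P.v ms1 ms2) : goodpair P.v (mlist P ms1 ms2) ms1 := by
  refine ⟨fun u => mem_wr_mlist hg, ?_⟩
  intro u u' hu hu' h1 h2
  have hu1 : u ∈ wr ms1 := (mem_wr_mlist hg).1 hu
  have hu1' : u' ∈ wr ms1 := (mem_wr_mlist hg).1 hu'
  have fwd : ∀ a a' : ℕ × Fin dim, a ∈ wr ms1 → a' ∈ wr ms1 → a.1 ≤ a'.1 + P.v →
      fwIdx ms1 a < fwIdx ms1 a' → fwIdx (mlist P ms1 ms2) a < fwIdx (mlist P ms1 ms2) a' := by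
    intro a a' ha ha' hw hlt
    refine fwIdx_mlist_lt hg ha ha' (rankR_lt hg ?_)
    exact ⟨List.mem_toFinset.2 ha, List.mem_toFinset.2 ha', hw, Or.inl ⟨ha, ha', hlt⟩⟩
  constructor
  · intro hlt
    rcases mem_wr.1 hu1 with ⟨m0, -, -⟩
    by_contra hcon
    rcases Nat.lt_or_ge (fwIdx ms1 u') (fwIdx ms1 u) with hgt | hge
    · have := fwd u' u hu1' hu1 h2 hgt
      omega
    · have heq : fwIdx ms1 u = fwIdx ms1 u' := by omega
      have := fwIdx_inj m0 hu1 hu1' heq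
      subst this
      omega
  · exact fwd u u' hu1 hu1' h1

lemma combine_main (P : Protocol Q D dim) (ms1 ms2 : List (Move Q D dim))
    (σ1 σ2 : Abs Q dim)
    (h1 : AbsRun P (Abs.init P) ms1 σ1) (h2 : AbsRun P (Abs.init P) ms2 σ2)
    (hg : goodpair P.v ms1 ms2) :
    ∃ ms σ, AbsRun P (Abs.init P) ms σ ∧ σ.S = σ1.S ∪ σ2.S ∧ σ.W = σ1.W ∧ σ.W = σ2.W ∧
      goodpair P.v ms ms1 := by
  refine ⟨mlist P ms1 ms2, (mlist P ms1 ms2).foldl absNext (Abs.init P), ?_, ?_, ?_, ?_,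
    goodpair_mlist hg⟩
  · exact run_of_steps P (junkm P) _ _ (combined_step hg h1 h2)
  · rw [foldl_S, run_foldl h1, run_foldl h2, foldl_S, foldl_S]
    ext x
    simp only [Set.mem_union, Set.mem_setOf_eq, mem_mlist]
    constructor
    · rintro (h | ⟨m, hm | hm, hp⟩)
      · exact Or.inl (Or.inl h)
      · exact Or.inl (Or.inr ⟨m, hm, hp⟩)
      · exact Or.inr (Or.inr ⟨m, hm, hp⟩)
    · rintro ((h | ⟨m, hm, hp⟩) | (h | ⟨m, hm, hp⟩))
      · exact Or.inl h
      · exact Or.inr ⟨m, Or.inl hm, hp⟩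
      · exact Or.inl h
      · exact Or.inr ⟨m, Or.inr hm, hp⟩
  · rw [foldl_W, run_foldl h1, foldl_W]
    ext u
    simp only [Set.mem_union, Set.mem_setOf_eq, mem_mlist]
    constructor
    · rintro (h | ⟨m, hm | hm, hw⟩)
      · exact Or.inl h
      · exact Or.inr ⟨m, hm, hw⟩
      · exact Or.inr (mem_wr.1 ((hg.1 u).2 (mem_wr.2 ⟨m, hm, hw⟩)))
    · rintro (h | ⟨m, hm, hw⟩)
      · exact Or.inl h
      · exact Or.inr ⟨m, Or.inl hm, hw⟩
  · rw [foldl_W, run_foldl h2, foldl_W]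
    ext u
    simp only [Set.mem_union, Set.mem_setOf_eq, mem_mlist]
    constructor
    · rintro (h | ⟨m, hm | hm, hw⟩)
      · exact Or.inl h
      · exact Or.inr (mem_wr.1 ((hg.1 u).1 (mem_wr.2 ⟨m, hm, hw⟩)))
      · exact Or.inr ⟨m, hm, hw⟩
    · rintro (h | ⟨m, hm, hw⟩)
      · exact Or.inl h
      · exact Or.inr ⟨m, Or.inr hm, hw⟩


end Combine

/-- Combining executions with equal windowed first-write projections (Lemma 6). -/
theorem combine_equal_windowed_fwo {Q D : Type} {dim : ℕ}
    (P : Protocol Q D dim) (ms1 ms2 : List (Move Q D dim)) (σ1 σ2 : Abs Q dim)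
    (h1 : AbsRun P (Abs.init P) ms1 σ1) (h2 : AbsRun P (Abs.init P) ms2 σ2)
    (hfwo : ∀ k : ℕ, winproj P.v k (fwo ∅ ms1) = winproj P.v k (fwo ∅ ms2)) :
    ∃ ms : List (Move Q D dim), ∃ σ : Abs Q dim,
      AbsRun P (Abs.init P) ms σ ∧
      σ.S = σ1.S ∪ σ2.S ∧
      σ.W = σ1.W ∧ σ.W = σ2.W ∧
      ∀ k : ℕ, winproj P.v k (fwo ∅ ms) = winproj P.v k (fwo ∅ ms1) := by
  obtain ⟨ms, σ, hrun, hS, hW1, hW2, hgood⟩ :=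
    Combine.combine_main P ms1 ms2 σ1 σ2 h1 h2 (Combine.winproj_to_goodpair hfwo)
  exact ⟨ms, σ, hrun, hS, hW1, hW2, Combine.goodpair_to_winproj hgood⟩
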